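/- Let d ≥ 2. For every injective tuple x = (x_1,…,x_{d−1}) of points of [0,1) there exists n ∈ ℕ such that A^m(x) = A^n(x) for all m ≥ n; moreover the stable tuple a = A^n(x) satisfies a_1 < a_2 < ⋯ < a_{d−1} and a_i < i/d for every i ∈ {1,…,d−1}. -/

import Mathlib

open Set

/-- Thurston's rearrangement map `A` on tuples `x = (x_1, …, x_{d-1})` of points of
`[0,1)` (index `i : Fin (d-1)` corresponds to the `(i+1)`-st coordinate): first replace
`x` by its non-decreasing rearrangement `x̂ = x ∘ Tuple.sort x`, then subtract `1/d`
from each entry `x̂ i` with `x̂ i ≥ (i+1)/d`. -/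
noncomputable def stepA (d : ℕ) (x : Fin (d - 1) → ℝ) : Fin (d - 1) → ℝ :=
  fun i =>
    if (x ∘ Tuple.sort x) i < ((i : ℕ) + 1 : ℝ) / d then (x ∘ Tuple.sort x) i
    else (x ∘ Tuple.sort x) i - 1 / d

/-- A tuple is "good" if it is strictly increasing and entry `i` is `< (i+1)/d`. -/
def GoodA (d : ℕ) (x : Fin (d - 1) → ℝ) : Prop :=
  StrictMono x ∧ ∀ i : Fin (d - 1), x i < ((i : ℕ) + 1 : ℝ) / d

lemma stepA_fix (d : ℕ) (x : Fin (d - 1) → ℝ) (h : GoodA d x) : stepA d x = x := by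
  have hs : Tuple.sort x = Equiv.refl _ :=
    (Tuple.sort_eq_refl_iff_monotone).2 h.1.monotone
  funext i
  simp only [stepA, hs, Function.comp, Equiv.refl_apply]
  exact if_pos (h.2 i)

lemma stepA_key (d : ℕ) (hd : 2 ≤ d) (x : Fin (d - 1) → ℝ)
    (hinj : Function.Injective x) (hx : ∀ i, x i ∈ Ico (0 : ℝ) 1) :
    Function.Injective (stepA d x) ∧ (∀ i, stepA d x i ∈ Ico (0 : ℝ) 1) ∧
      (GoodA d (stepA d x) ∨
        ∑ i, stepA d x i ≤ (∑ i, x i) - 1 / d) := by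
  have hd0 : (0:ℝ) < d := by positivity
  set y : Fin (d - 1) → ℝ := x ∘ Tuple.sort x with hy
  have hymono : Monotone y := Tuple.monotone_sort x
  have hyinj : Function.Injective y := hinj.comp (Tuple.sort x).injective
  have hysm : StrictMono y := hymono.strictMono_of_injective hyinj
  have hyIco : ∀ i, y i ∈ Ico (0:ℝ) 1 := fun i => hx _
  have hstep : ∀ i, stepA d x i =
      if y i < ((i : ℕ) + 1 : ℝ) / d then y i else y i - 1 / d := fun i => rfl
  -- range
  have hrange : ∀ i, stepA d x i ∈ Ico (0:ℝ) 1 := by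
    intro i
    rw [hstep]
    split_ifs with h
    · exact hyIco i
    · push_neg at h
      constructor
      · have h0 : ((i : ℕ) + 1 : ℝ) / d - 1 / d = ((i:ℕ) : ℝ) / d := by
          field_simp
          ring
        have h2 : (0:ℝ) ≤ ((i:ℕ) : ℝ) / d := by positivity
        linarith
      · have := (hyIco i).2
        have : (0:ℝ) < 1 / d := by positivity
        linarith
  -- injectivity
  have hinjA : Function.Injective (stepA d x) := by
    intro i j hij
    by_contra hne
    wlog hlt : i < j generalizing i j
    · exact this hij.symm (Ne.symm hne) (lt_of_le_of_ne (not_lt.1 hlt) (Ne.symm hne))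
    have hylt : y i < y j := hysm hlt
    have hij2 : ((i : ℕ) : ℝ) + 2 ≤ ((j : ℕ) : ℝ) + 1 := by
      have : (i : ℕ) + 1 ≤ (j : ℕ) := hlt
      exact_mod_cast by omega
    rw [hstep, hstep] at hij
    split_ifs at hij with h1 h2 h2
    · exact absurd hij hylt.ne
    · -- y i < (i+1)/d, y j ≥ (j+1)/d, y i = y j - 1/d
      push_neg at h2
      have : ((i:ℕ) + 2 : ℝ) / d ≤ y j := le_trans (by gcongr) h2
      have hdd : ((i:ℕ) + 2 : ℝ) / d = ((i:ℕ)+1:ℝ)/d + 1/d := by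
        field_simp
        ring
      linarith
    · -- y i - 1/d = y j with y i > y i - 1/d ... and y i < y j
      have : (0:ℝ) < 1/d := by positivity
      linarith
    · have : y i = y j := by linarith
      exact absurd this hylt.ne
  refine ⟨hinjA, hrange, ?_⟩
  by_cases hall : ∀ i, y i < ((i : ℕ) + 1 : ℝ) / d
  · left
    have hAy : stepA d x = y := by
      funext i; rw [hstep]; exact if_pos (hall i)
    rw [hAy]
    exact ⟨hysm, hall⟩
  · right
    push_neg at hall
    obtain ⟨i0, hi0⟩ := hall
    have hsumy : ∑ i, y i = ∑ i, x i := by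
      rw [hy]
      exact Equiv.sum_comp (Tuple.sort x) x
    have hle : ∀ i, stepA d x i ≤ y i := by
      intro i; rw [hstep]; split_ifs
      · exact le_rfl
      · have : (0:ℝ) < 1/d := by positivity
        linarith
    have h1 : (1:ℝ)/d ≤ ∑ i, (y i - stepA d x i) := by
      have hterm : y i0 - stepA d x i0 = 1/d := by
        rw [hstep]
        rw [if_neg (not_lt.2 hi0)]
        ring
      calc (1:ℝ)/d = y i0 - stepA d x i0 := hterm.symm
        _ ≤ ∑ i, (y i - stepA d x i) :=
          Finset.single_le_sum (fun i _ => sub_nonneg.2 (hle i)) (Finset.mem_univ i0)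
    rw [Finset.sum_sub_distrib, hsumy] at h1
    linarith

theorem stepA_stabilizes (d : ℕ) (hd : 2 ≤ d) (x : Fin (d - 1) → ℝ)
    (hinj : Function.Injective x) (hx : ∀ i, x i ∈ Ico (0 : ℝ) 1) :
    ∃ n : ℕ, (∀ m, n ≤ m → (stepA d)^[m] x = (stepA d)^[n] x) ∧
      StrictMono ((stepA d)^[n] x) ∧
      ∀ i : Fin (d - 1), (stepA d)^[n] x i < ((i : ℕ) + 1 : ℝ) / d := by
  have hd0 : (0:ℝ) < d := by positivity
  have inv : ∀ n, Function.Injective ((stepA d)^[n] x) ∧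
      ∀ i, (stepA d)^[n] x i ∈ Ico (0:ℝ) 1 := by
    intro n
    induction n with
    | zero => exact ⟨hinj, hx⟩
    | succ n ih =>
      rw [Function.iterate_succ_apply']
      obtain ⟨h1, h2, _⟩ := stepA_key d hd _ ih.1 ih.2
      exact ⟨h1, h2⟩
  by_cases hgood : ∃ n, GoodA d ((stepA d)^[n] x)
  · obtain ⟨n, hg⟩ := hgood
    refine ⟨n, ?_, hg.1, hg.2⟩
    intro m hm
    obtain ⟨k, rfl⟩ := Nat.exists_eq_add_of_le hm
    rw [Nat.add_comm, Function.iterate_add_apply,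
      Function.iterate_fixed (stepA_fix d _ hg) k]
  · exfalso
    push_neg at hgood
    have hdec : ∀ n : ℕ, ∑ i, (stepA d)^[n] x i ≤ (∑ i, x i) - n * (1/d) := by
      intro n
      induction n with
      | zero => simp
      | succ n ih =>
        have hkey := stepA_key d hd _ (inv n).1 (inv n).2
        rcases hkey.2.2 with hg | hsum
        · exact absurd (by rwa [Function.iterate_succ_apply']) (hgood (n+1))
        · rw [Function.iterate_succ_apply']
          push_cast
          linarith
    have hpos : (0:ℝ) ≤ ∑ i, (stepA d)^[d*d] x i :=
      Finset.sum_nonneg fun i _ => ((inv (d*d)).2 i).1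
    have hsumx : ∑ i, x i ≤ ((d : ℝ) - 1) := by
      calc ∑ i, x i ≤ ∑ _i : Fin (d-1), (1:ℝ) :=
            Finset.sum_le_sum fun i _ => (hx i).2.le
        _ = ((d - 1 : ℕ) : ℝ) := by simp
        _ ≤ (d:ℝ) - 1 := by
            have : (1:ℕ) ≤ d := by omega
            push_cast [Nat.cast_sub this]
            linarith
    have hdd : ((d*d : ℕ) : ℝ) * (1/d) = d := by
      push_cast
      field_simp
    have := hdec (d*d)
    rw [hdd] at this
    linarith
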